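/- Let A be a commutative ℚ-algebra and a_1, …, a_n ∈ A. If there exists r ≥ 0 such that a_1^{r+i} + a_2^{r+i} + ⋯ + a_n^{r+i} = 0 for all 1 ≤ i ≤ n, then each a_j is nilpotent. -/

import Mathlib

open MvPolynomial Finset

section aux
variable {A : Type*} [CommRing A] [Algebra ℚ A] {n : ℕ}

lemma aux_esymm_zero (b : Fin n → A) {k : ℕ} (hk : n < k) :
    (aeval b) (esymm (Fin n) ℚ k) = 0 := by
  rw [aeval_esymm_eq_multiset_esymm]
  rw [Multiset.esymm, Multiset.powersetCard_eq_empty]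
  · simp
  · simpa using hk

lemma aux_newton (b : Fin n → A) (k : ℕ) :
    (k : A) * (aeval b) (esymm (Fin n) ℚ k) =
      (-1) ^ (k + 1) * ∑ p ∈ Finset.HasAntidiagonal.antidiagonal k with p.1 < k,
        (-1) ^ p.1 * (aeval b) (esymm (Fin n) ℚ p.1) * ∑ j, b j ^ p.2 := by
  have := congrArg (aeval b) (MvPolynomial.mul_esymm_eq_sum (Fin n) ℚ k)
  simpa [psum, map_sum, map_mul, map_pow] using this

lemma aux_nilpotent (b : Fin n → A) (hb : ∀ m : ℕ, 1 ≤ m → ∑ j, b j ^ m = 0) :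
    ∀ j, b j ^ n = 0 := by
  have hE : ∀ k : ℕ, 1 ≤ k → (aeval b) (esymm (Fin n) ℚ k) = 0 := by
    intro k hk
    have hN := aux_newton b k
    have hS : (∑ p ∈ Finset.HasAntidiagonal.antidiagonal k with p.1 < k,
        (-1) ^ p.1 * (aeval b) (esymm (Fin n) ℚ p.1) * ∑ j, b j ^ p.2) = 0 := by
      apply Finset.sum_eq_zero
      intro p hp
      simp only [Finset.mem_filter, Finset.HasAntidiagonal.mem_antidiagonal] at hp
      rw [hb p.2 (by omega), mul_zero]
    rw [hS, mul_zero] at hN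
    calc (aeval b) (esymm (Fin n) ℚ k)
        = algebraMap ℚ A ((k:ℚ))⁻¹ * ((k : A) * (aeval b) (esymm (Fin n) ℚ k)) := by
          rw [← mul_assoc, show ((k:A)) = algebraMap ℚ A (k:ℚ) by simp, ← map_mul,
            inv_mul_cancel₀ (show (k:ℚ) ≠ 0 by exact_mod_cast (by omega : k ≠ 0)), map_one, one_mul]
      _ = 0 := by rw [hN, mul_zero]
  intro j
  have hprod := Multiset.prod_X_sub_X_eq_sum_esymm ((Finset.univ.val.map b) : Multiset A)
  have hcard : Multiset.card (Finset.univ.val.map b) = n := by simp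
  have hev := congrArg (Polynomial.eval (b j)) hprod
  rw [Polynomial.eval_multiset_prod] at hev
  have hzero : (Multiset.map (Polynomial.eval (b j))
      (Multiset.map (fun t => Polynomial.X - Polynomial.C t) (Finset.univ.val.map b))).prod = 0 := by
    apply Multiset.prod_eq_zero
    rw [Multiset.map_map, Multiset.map_map]
    refine Multiset.mem_map.mpr ⟨j, Finset.mem_univ_val j, by simp⟩
  rw [hzero] at hev
  rw [hcard] at hev
  have hME : ∀ k, (Finset.univ.val.map b).esymm k = (aeval b) (esymm (Fin n) ℚ k) :=
    fun k => (aeval_esymm_eq_multiset_esymm (Fin n) ℚ k b).symm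
  simp only [Polynomial.eval_finset_sum, Polynomial.eval_mul, Polynomial.eval_pow,
    Polynomial.eval_C, Polynomial.eval_X, Polynomial.eval_neg, Polynomial.eval_one, hME] at hev
  rw [Finset.sum_eq_single 0 ?h1 ?h2] at hev
  · simpa using hev.symm
  · intro k hk hk0
    rw [hE k (by omega)]
    ring
  · intro hk
    simp at hk

end aux

theorem stmt3 (A : Type*) [CommRing A] [Algebra ℚ A] (n : ℕ) (a : Fin n → A)
    (r : ℕ) (h : ∀ i : ℕ, 1 ≤ i → i ≤ n → ∑ j, a j ^ (r + i) = 0) :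
    ∀ j, IsNilpotent (a j) := by
  have hP : ∀ k : ℕ, r + 1 ≤ k → ∑ j, a j ^ k = 0 := by
    intro k
    induction k using Nat.strong_induction_on with
    | _ k ih =>
      intro hk
      by_cases hkn : k ≤ r + n
      · have := h (k - r) (by omega) (by omega)
        rwa [show r + (k - r) = k by omega] at this
      · have hN := aux_newton a k
        rw [aux_esymm_zero a (show n < k by omega), mul_zero] at hN
        have hS : (∑ p ∈ Finset.HasAntidiagonal.antidiagonal k with p.1 < k,
            (-1) ^ p.1 * (aeval a) (esymm (Fin n) ℚ p.1) * ∑ j, a j ^ p.2) = 0 :=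
          neg_one_pow_mul_eq_zero_iff.mp hN.symm
        rw [Finset.sum_eq_single_of_mem (0, k) ?hm ?ho] at hS
        · simpa using hS
        case hm =>
          simp only [Finset.mem_filter, Finset.HasAntidiagonal.mem_antidiagonal]
          omega
        case ho =>
          intro p hp hne
          simp only [Finset.mem_filter, Finset.HasAntidiagonal.mem_antidiagonal] at hp
          have hp1 : 1 ≤ p.1 := by
            rcases Nat.eq_zero_or_pos p.1 with h0 | h1
            · exfalso; apply hne
              have : p.2 = k := by omega
              exact Prod.ext h0 this
            · exact h1
          by_cases hpn : n < p.1
          · rw [aux_esymm_zero a hpn, mul_zero, zero_mul]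
          · rw [ih p.2 (by omega) (by omega), mul_zero]
  intro j
  have hb : ∀ m : ℕ, 1 ≤ m → ∑ j', (a j' ^ (r + 1)) ^ m = 0 := by
    intro m hm
    simp only [← pow_mul]
    exact hP ((r + 1) * m) (by nlinarith)
  have := aux_nilpotent (fun j' => a j' ^ (r + 1)) hb j
  exact ⟨(r + 1) * n, by rw [pow_mul]; exact this⟩
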